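/- Let k be a natural number, let P be a nonempty finite set of points in [0,2^k)², let (x,y) ∈ [0,2^k)² be a query point with (x,y) in the same depth-0 square as P (always true), and for each d ≤ k let N_d be the number of points of P lying in the depth-d dyadic square containing (x,y). Let d₀ ≤ k and let g be a natural number with g ≥ 2^{k−d₀}, and let k_g be the number of points of P at L∞ distance strictly less than g from (x,y). If k_g ≥ 1, then the number of indices d with d₀ ≤ d < k, N_{d+1} ≥ 1, and 2·N_{d+1} ≤ N_d is at most log₂ k_g (i.e., at most Nat.log 2 k_g). -/

import Mathlib

lemma quot_eq_close (e a b : ℕ) (he : 0 < e) (h : a / e = b / e) :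
    (a : ℤ) - b < e ∧ (b : ℤ) - a < e := by
  have h1 := Nat.div_add_mod a e
  have h2 := Nat.div_add_mod b e
  rw [h] at h1
  have hm1 := Nat.mod_lt a he
  have hm2 := Nat.mod_lt b he
  generalize b / e = q at h1 h2
  generalize q * e = T at h1 h2
  generalize a % e = r1 at h1 hm1
  generalize b % e = r2 at h2 hm2
  omega

theorem light_depths_le_log_kg (k : ℕ)
    (P : Finset (ℕ × ℕ)) (hPne : P.Nonempty)
    (hP : ∀ p ∈ P, p.1 < 2 ^ k ∧ p.2 < 2 ^ k)
    (x y : ℕ) (hx : x < 2 ^ k) (hy : y < 2 ^ k)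
    (N : ℕ → ℕ)
    (hN : ∀ d ≤ k, N d = (P.filter fun p =>
        p.1 / 2 ^ (k - d) = x / 2 ^ (k - d) ∧
        p.2 / 2 ^ (k - d) = y / 2 ^ (k - d)).card)
    (d₀ : ℕ) (hd₀ : d₀ ≤ k) (g : ℕ) (hg : 2 ^ (k - d₀) ≤ g)
    (kg : ℕ)
    (hkg : kg = (P.filter fun p =>
        max |(p.1 : ℤ) - x| |(p.2 : ℤ) - y| < g).card)
    (hkg1 : 1 ≤ kg) :
    ((Finset.Ico d₀ k).filter fun d =>
        1 ≤ N (d + 1) ∧ 2 * N (d + 1) ≤ N d).card ≤ Nat.log 2 kg := by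
  set S := (Finset.Ico d₀ k).filter (fun d => 1 ≤ N (d + 1) ∧ 2 * N (d + 1) ≤ N d) with hS
  -- monotonicity of N
  have hmono : ∀ a, a < k → N (a + 1) ≤ N a := by
    intro a ha
    rw [hN (a + 1) ha, hN a ha.le]
    apply Finset.card_le_card
    intro p hp
    simp only [Finset.mem_filter] at hp ⊢
    obtain ⟨hpP, h1, h2⟩ := hp
    refine ⟨hpP, ?_⟩
    have he : k - a = (k - (a + 1)) + 1 := by omega
    constructor
    · rw [he, pow_succ, ← Nat.div_div_eq_div_mul, ← Nat.div_div_eq_div_mul, h1]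
    · rw [he, pow_succ, ← Nat.div_div_eq_div_mul, ← Nat.div_div_eq_div_mul, h2]
  have key : ∀ j, j ≤ k - d₀ →
      2 ^ ((S.filter (fun d => k - j ≤ d)).card) ≤ max (N (k - j)) 1 := by
    intro j
    induction j with
    | zero =>
      intro _
      have hemp : S.filter (fun d => k - 0 ≤ d) = ∅ := by
        apply Finset.filter_false_of_mem
        intro d hd
        simp only [hS, Finset.mem_filter, Finset.mem_Ico] at hd
        omega
      rw [hemp]
      simp
    | succ j ih =>
      intro hj
      have hjk : j ≤ k - d₀ := by omega
      have ih' := ih hjk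
      have ha : k - (j + 1) < k := by omega
      have ha1 : k - (j + 1) + 1 = k - j := by omega
      set a := k - (j + 1) with haa
      by_cases hmem : a ∈ S
      · have hsub : S.filter (fun d => a ≤ d) ⊆ insert a (S.filter (fun d => k - j ≤ d)) := by
          intro d hd
          simp only [Finset.mem_filter, Finset.mem_insert] at hd ⊢
          rcases hd with ⟨hdS, hda⟩
          rcases eq_or_lt_of_le hda with h | h
          · exact Or.inl h.symm
          · exact Or.inr ⟨hdS, by omega⟩
        have hcard : (S.filter (fun d => a ≤ d)).card ≤
            (S.filter (fun d => k - j ≤ d)).card + 1 := by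
          calc (S.filter (fun d => a ≤ d)).card
              ≤ (insert a (S.filter (fun d => k - j ≤ d))).card := Finset.card_le_card hsub
            _ ≤ (S.filter (fun d => k - j ≤ d)).card + 1 := Finset.card_insert_le _ _
        simp only [hS, Finset.mem_filter, Finset.mem_Ico] at hmem
        obtain ⟨⟨_, _⟩, h1, h2⟩ := hmem
        rw [ha1] at h1 h2
        calc 2 ^ (S.filter (fun d => a ≤ d)).card
            ≤ 2 ^ ((S.filter (fun d => k - j ≤ d)).card + 1) :=
              Nat.pow_le_pow_right (by norm_num) hcard
          _ = 2 * 2 ^ (S.filter (fun d => k - j ≤ d)).card := by ring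
          _ ≤ 2 * max (N (k - j)) 1 := by omega
          _ ≤ max (N a) 1 := by omega
      · have heq : S.filter (fun d => a ≤ d) = S.filter (fun d => k - j ≤ d) := by
          apply Finset.filter_congr
          intro d hd
          constructor
          · intro hda
            rcases eq_or_lt_of_le hda with h | h
            · exact absurd (h ▸ hd) hmem
            · simpa using by omega
          · intro h
            omega
        have hm := hmono a ha
        rw [ha1] at hm
        rw [heq]
        omega
  have hfinal := key (k - d₀) le_rfl
  have hkd : k - (k - d₀) = d₀ := by omega
  rw [hkd] at hfinal
  have hSall : S.filter (fun d => d₀ ≤ d) = S := by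
    apply Finset.filter_true_of_mem
    intro d hd
    simp only [hS, Finset.mem_filter, Finset.mem_Ico] at hd
    omega
  rw [hSall] at hfinal
  -- N d₀ ≤ kg
  have hNkg : N d₀ ≤ kg := by
    rw [hN d₀ hd₀, hkg]
    apply Finset.card_le_card
    intro p hp
    simp only [Finset.mem_filter] at hp ⊢
    obtain ⟨hpP, h1, h2⟩ := hp
    refine ⟨hpP, ?_⟩
    have he : 0 < 2 ^ (k - d₀) := Nat.pow_pos (by norm_num)
    have c1 := quot_eq_close _ _ _ he h1
    have c2 := quot_eq_close _ _ _ he h2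
    have hgz : (2 ^ (k - d₀) : ℤ) ≤ (g : ℤ) := by exact_mod_cast hg
    simp only [max_lt_iff, abs_sub_lt_iff]
    push_cast at c1 c2 hgz ⊢
    constructor <;> constructor <;> omega
  have h2kg : 2 ^ S.card ≤ kg := le_trans hfinal (by omega)
  exact Nat.le_log_of_pow_le (by norm_num) h2kg
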